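/- limsup_{n→∞} 2·b(n) / (2n)^{log₃(√2+1)} ≥ 1. -/

import Mathlib

open Filter Real Topology

/-- Auxiliary sequence: `nsP n = (3^(n+1) - 1)/2`. -/
def nsP : ℕ → ℕ
  | 0 => 1
  | n + 1 => 3 * nsP n + 1

lemma nsP_formula : ∀ n, 2 * nsP n + 1 = 3 ^ (n + 1) := by
  intro n
  induction n with
  | zero => rfl
  | succ n ih => simp only [nsP, pow_succ]; omega

lemma nsP_ge : ∀ n, n ≤ nsP n := by
  intro n
  induction n with
  | zero => simp [nsP]
  | succ n ih => simp only [nsP]; omega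

theorem northshield_limsup_ge (b : ℕ → ℝ)
    (hb0 : b 0 = 0) (hb1 : b 1 = 1)
    (hrec0 : ∀ n : ℕ, b (3 * n) = b n)
    (hrec1 : ∀ n : ℕ, b (3 * n + 1) = Real.sqrt 2 * b n + b (n + 1))
    (hrec2 : ∀ n : ℕ, b (3 * n + 2) = b n + Real.sqrt 2 * b (n + 1)) :
    1 ≤ Filter.limsup
      (fun n : ℕ => 2 * b n / (2 * (n : ℝ)) ^ Real.logb 3 (Real.sqrt 2 + 1))
      Filter.atTop := by
  have s2nn : (0:ℝ) ≤ Real.sqrt 2 := Real.sqrt_nonneg 2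
  have s2ge1 : (1:ℝ) ≤ Real.sqrt 2 := by
    have := Real.sqrt_le_sqrt (by norm_num : (1:ℝ) ≤ 2)
    simpa using this
  set A : ℝ := Real.sqrt 2 + 1 with hA
  set α : ℝ := Real.logb 3 A with hα
  have hA1 : (1:ℝ) < A := by rw [hA]; linarith
  have hA0 : (0:ℝ) < A := by linarith
  have hα0 : 0 ≤ α := Real.logb_nonneg (by norm_num) hA1.le
  have h3α : (3:ℝ) ^ α = A := Real.rpow_logb (by norm_num) (by norm_num) hA0
  have hb2 : b 2 = Real.sqrt 2 := by
    have h := hrec2 0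
    simpa [hb0, hb1] using h
  -- nonnegativity
  have hnn : ∀ n, 0 ≤ b n := by
    intro n
    induction n using Nat.strong_induction_on with
    | _ n ih =>
      rcases Nat.lt_or_ge n 3 with h3 | h3
      · interval_cases n
        · simp [hb0]
        · simp [hb1]
        · rw [hb2]; exact s2nn
      · obtain ⟨q, r, hr, rfl⟩ : ∃ q r, r < 3 ∧ n = 3 * q + r :=
          ⟨n / 3, n % 3, Nat.mod_lt _ (by norm_num), (Nat.div_add_mod n 3).symm⟩
        interval_cases r
        · rw [Nat.add_zero, hrec0]; exact ih q (by omega)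
        · rw [hrec1]
          exact add_nonneg (mul_nonneg s2nn (ih q (by omega))) (ih (q+1) (by omega))
        · rw [hrec2]
          exact add_nonneg (ih q (by omega)) (mul_nonneg s2nn (ih (q+1) (by omega)))
  -- the max sequence
  set c : ℕ → ℝ := fun n => max (b n) (b (n+1)) with hc
  have hcnn : ∀ n, 0 ≤ c n := fun n => le_trans (hnn n) (le_max_left _ _)
  have hc0 : c 0 = 1 := by simp [hc, hb0, hb1]
  have haux : ∀ q i, i ≤ 3 → b (3*q + i) ≤ A * c q := by
    intro q i hi
    have h1 : b q ≤ c q := le_max_left _ _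
    have h2 : b (q+1) ≤ c q := le_max_right _ _
    interval_cases i
    · rw [show 3*q + 0 = 3*q from rfl, hrec0]
      nlinarith [hcnn q]
    · rw [hrec1]; rw [hA]; nlinarith
    · rw [hrec2]; rw [hA]; nlinarith
    · rw [show 3*q + 3 = 3*(q+1) by ring, hrec0]
      nlinarith [hcnn q]
  have hstep : ∀ m, 1 ≤ m → c m ≤ A * c (m / 3) := by
    intro m hm
    obtain ⟨q, r, hr, rfl⟩ : ∃ q r, r < 3 ∧ m = 3 * q + r :=
      ⟨m / 3, m % 3, Nat.mod_lt _ (by norm_num), (Nat.div_add_mod m 3).symm⟩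
    have hdiv : (3*q + r) / 3 = q := by omega
    rw [hdiv]
    interval_cases r
    · exact max_le (haux q 0 (by norm_num)) (haux q 1 (by norm_num))
    · exact max_le (haux q 1 (by norm_num)) (haux q 2 (by norm_num))
    · exact max_le (haux q 2 (by norm_num)) (haux q 3 (by norm_num))
  have hclog : ∀ m, c m ≤ A ^ (Nat.log 3 m + 1) := by
    intro m
    induction m using Nat.strong_induction_on with
    | _ m ih =>
      rcases Nat.lt_or_ge m 1 with h1 | h1
      · interval_cases m
        simp [hc0, Nat.log_zero_right]
        linarith
      rcases Nat.lt_or_ge m 3 with h3 | h3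
      · have hlog : Nat.log 3 m = 0 := Nat.log_eq_zero_iff.mpr (Or.inl (by omega))
        have := hstep m h1
        have hd : m / 3 = 0 := by omega
        rw [hd, hc0, mul_one] at this
        rw [hlog, pow_one]
        exact this
      · have hlogpos : 0 < Nat.log 3 m := Nat.log_pos (by norm_num) h3
        have hlogdiv : Nat.log 3 (m / 3) = Nat.log 3 m - 1 := Nat.log_div_base 3 m
        have hmd : m / 3 < m := Nat.div_lt_self (by omega) (by norm_num)
        have h2 := ih (m / 3) hmd
        have h3' := hstep m h1
        calc c m ≤ A * c (m / 3) := h3'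
          _ ≤ A * A ^ (Nat.log 3 (m/3) + 1) := by
              apply mul_le_mul_of_nonneg_left h2 hA0.le
          _ = A ^ (Nat.log 3 (m/3) + 2) := by ring
          _ = A ^ (Nat.log 3 m + 1) := by
              congr 1
              omega
  -- upper bound b m ≤ A^2 * m ^ α for m ≥ 1
  have hpowle : ∀ k : ℕ, ∀ m : ℕ, 3^k ≤ m → A ^ k ≤ (m:ℝ) ^ α := by
    intro k m hkm
    have h1 : A ^ k = ((3:ℝ) ^ (k:ℕ)) ^ α := by
      rw [← h3α, ← Real.rpow_natCast ((3:ℝ)^α) k, ← Real.rpow_natCast (3:ℝ) k,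
        ← Real.rpow_mul (by norm_num), ← Real.rpow_mul (by norm_num), mul_comm]
    rw [h1]
    apply Real.rpow_le_rpow (by positivity) _ hα0
    exact_mod_cast hkm
  have hbbound : ∀ m : ℕ, 1 ≤ m → b m ≤ A * (m:ℝ) ^ α := by
    intro m hm
    have h1 : b m ≤ A ^ (Nat.log 3 m + 1) := le_trans (le_max_left _ _) (hclog m)
    have h2 : A ^ (Nat.log 3 m) ≤ (m:ℝ) ^ α :=
      hpowle _ m (Nat.pow_log_le_self 3 (by omega))
    calc b m ≤ A ^ (Nat.log 3 m + 1) := h1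
      _ = A * A ^ (Nat.log 3 m) := by ring
      _ ≤ A * (m:ℝ) ^ α := by nlinarith [pow_nonneg hA0.le (Nat.log 3 m)]
  -- boundedness of the sequence
  set u : ℕ → ℝ := fun n : ℕ => 2 * b n / (2 * (n : ℝ)) ^ α with hu
  set C : ℝ := 2 * A / (2:ℝ) ^ α with hC
  have h2α : (0:ℝ) < (2:ℝ) ^ α := Real.rpow_pos_of_pos (by norm_num) α
  have hCpos : 0 < C := by positivity
  have hCb : ∀ m, u m ≤ C := by
    intro m
    rcases Nat.eq_zero_or_pos m with rfl | hm
    · simp [hu, hb0]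
      positivity
    · have hmpos : (0:ℝ) < (m:ℝ) := by exact_mod_cast hm
      have hden : (2 * (m:ℝ)) ^ α = (2:ℝ)^α * (m:ℝ)^α := by
        rw [Real.mul_rpow (by norm_num) hmpos.le]
      have hmα : (0:ℝ) < (m:ℝ)^α := Real.rpow_pos_of_pos hmpos α
      rw [hu, hC]
      simp only
      rw [hden, div_le_div_iff₀ (by positivity) h2α]
      have := hbbound m hm
      nlinarith
  have hbdd : IsBoundedUnder (· ≤ ·) atTop u := isBoundedUnder_of ⟨C, hCb⟩
  -- lower bound along nsP n + 1
  set B : ℝ := Real.sqrt 2 - 1 with hB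
  have hB0 : 0 ≤ B := by rw [hB]; linarith
  have hXY : ∀ n, b (nsP n) = (A^(n+1) - B^(n+1))/2 ∧
      b (nsP n + 1) = (A^(n+1) + B^(n+1))/2 := by
    intro n
    induction n with
    | zero =>
      constructor
      · show b 1 = _
        rw [hb1, hA, hB]; ring
      · show b 2 = _
        rw [hb2, hA, hB]; ring
    | succ n ih =>
      obtain ⟨ih1, ih2⟩ := ih
      have e1 : nsP (n+1) = 3 * nsP n + 1 := rfl
      constructor
      · rw [e1, hrec1, ih1, ih2, hA, hB, pow_succ (Real.sqrt 2 + 1) (n+1),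
          pow_succ (Real.sqrt 2 - 1) (n+1)]
        ring
      · rw [show nsP (n+1) + 1 = 3 * nsP n + 2 from rfl, hrec2, ih1, ih2, hA, hB,
          pow_succ (Real.sqrt 2 + 1) (n+1), pow_succ (Real.sqrt 2 - 1) (n+1)]
        ring
  have hYlb : ∀ n, A ^ (n+1) ≤ 2 * b (nsP n + 1) := by
    intro n
    rw [(hXY n).2]
    have := pow_nonneg hB0 (n+1)
    linarith
  have hcast : ∀ n, (2:ℝ) * ((nsP n + 1 : ℕ):ℝ) = 3^(n+1) + 1 := by
    intro n
    have h := nsP_formula n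
    have h2 : (2:ℝ) * (nsP n : ℝ) + 1 = 3^(n+1) := by exact_mod_cast h
    push_cast
    linarith
  -- ratio along the subsequence
  have hur : ∀ n : ℕ, (1 + ((3:ℝ)⁻¹)^(n+1)) ^ (-α) ≤ u (nsP n + 1) := by
    intro n
    have h3k : (0:ℝ) < (3:ℝ)^(n+1) := by positivity
    have hden : (2 * ((nsP n + 1 : ℕ):ℝ)) ^ α = ((3:ℝ)^(n+1) + 1) ^ α := by
      rw [hcast n]
    have hdenpos : (0:ℝ) < ((3:ℝ)^(n+1) + 1) ^ α := Real.rpow_pos_of_pos (by positivity) α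
    have heq : (1 + ((3:ℝ)⁻¹)^(n+1)) ^ (-α) = A^(n+1) / ((3:ℝ)^(n+1) + 1) ^ α := by
      have ht : (1 + ((3:ℝ)⁻¹)^(n+1)) = ((3:ℝ)^(n+1) + 1) / (3:ℝ)^(n+1) := by
        field_simp
        rw [add_mul, ← mul_pow]; norm_num
      rw [ht, Real.rpow_neg (by positivity), Real.div_rpow (by positivity) h3k.le]
      rw [show ((3:ℝ)^(n+1)) ^ α = A ^ (n+1) by
        rw [← Real.rpow_natCast (3:ℝ) (n+1), ← Real.rpow_mul (by norm_num), mul_comm,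
          Real.rpow_mul (by norm_num), h3α, Real.rpow_natCast]]
      rw [inv_div]
    rw [heq, hu]
    simp only
    rw [hden, div_le_div_iff₀ hdenpos hdenpos]
    have := hYlb n
    nlinarith
  -- tendsto of the lower bound
  have hT : Tendsto (fun n : ℕ => (1 + ((3:ℝ)⁻¹)^(n+1)) ^ (-α)) atTop (𝓝 1) := by
    have t0 : Tendsto (fun n : ℕ => ((3:ℝ)⁻¹)^n) atTop (𝓝 0) :=
      tendsto_pow_atTop_nhds_zero_of_lt_one (by norm_num) (by norm_num)
    have t1 : Tendsto (fun n : ℕ => ((3:ℝ)⁻¹)^(n+1)) atTop (𝓝 0) :=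
      t0.comp (tendsto_add_atTop_nat 1)
    have t2 : Tendsto (fun n : ℕ => 1 + ((3:ℝ)⁻¹)^(n+1)) atTop (𝓝 1) := by
      have := tendsto_const_nhds.add t1 (f := fun _ : ℕ => (1:ℝ)) (x := atTop)
      simpa using this
    have t3 := t2.rpow_const (p := -α) (Or.inl one_ne_zero)
    simpa using t3
  -- conclude
  have hmain : ∀ d : ℝ, d < 1 → d ≤ Filter.limsup u atTop := by
    intro d hd
    have hev : ∀ᶠ n in atTop, d < (1 + ((3:ℝ)⁻¹)^(n+1)) ^ (-α) :=
      (tendsto_order.1 hT).1 d hd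
    have hev2 : ∀ᶠ n in atTop, d ≤ u (nsP n + 1) :=
      hev.mono fun n hn => le_trans hn.le (hur n)
    have htend : Tendsto (fun n => nsP n + 1) atTop atTop :=
      tendsto_atTop_mono (fun n => by have := nsP_ge n; simp only [id_eq]; omega) tendsto_id
    have hfreq : ∃ᶠ k in atTop, d ≤ u k := by
      have h1 : ∀ᶠ k in map (fun n => nsP n + 1) atTop, d ≤ u k := by
        rwa [eventually_map]
      exact (h1.frequently).filter_mono htend
    exact le_limsup_of_frequently_le hfreq hbdd
  by_contra hcon
  push_neg at hcon
  obtain ⟨d, hd1, hd2⟩ := exists_between hcon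
  exact absurd (hmain d hd2) (not_le.mpr hd1)
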